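/- Let E be a real inner product space, let F : E → ℝ be ρ₀-weakly convex, let h_k : E → ℝ be ρ₁-weakly convex for k = 1, …, m (m ≥ 1), and let β > 0. Then the hinge penalty objective Φ(x) = F(x) + (β/m) · Σ_{k=1}^m [h_k(x)]_+ is (ρ₀ + β·ρ₁)-weakly convex, i.e., the function x ↦ Φ(x) + ((ρ₀ + β·ρ₁)/2)·‖x‖² is convex on E. -/

import Mathlib

open scoped RealInnerProductSpace BigOperators

lemma normsq_convex_scaled {E : Type*} [NormedAddCommGroup E] [InnerProductSpace ℝ E]
    (c : ℝ) (hc : 0 ≤ c) : ConvexOn ℝ (Set.univ : Set E) (fun x => c * ‖x‖ ^ 2) := by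
  refine ⟨convex_univ, fun x _ y _ a b ha hb hab => ?_⟩
  have h1 : ‖a • x + b • y‖ ≤ a * ‖x‖ + b * ‖y‖ := by
    calc ‖a • x + b • y‖ ≤ ‖a • x‖ + ‖b • y‖ := norm_add_le _ _
      _ = a * ‖x‖ + b * ‖y‖ := by
        rw [norm_smul, norm_smul, Real.norm_eq_abs, Real.norm_eq_abs,
          abs_of_nonneg ha, abs_of_nonneg hb]
  have h2 : (0:ℝ) ≤ ‖a • x + b • y‖ := norm_nonneg _
  have h3 : ‖a • x + b • y‖ ^ 2 ≤ a * ‖x‖ ^ 2 + b * ‖y‖ ^ 2 := by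
    nlinarith [mul_nonneg ha hb, sq_nonneg (‖x‖ - ‖y‖), norm_nonneg x, norm_nonneg y]
  have h4 := mul_le_mul_of_nonneg_left h3 hc
  simp only [smul_eq_mul]
  nlinarith [h4]

/-- The hinge penalty objective Φ(x) = F(x) + (β/m) · Σ_k [h_k(x)]_+ is
(ρ₀ + β·ρ₁)-weakly convex when F is ρ₀-weakly convex and each h_k is ρ₁-weakly convex. -/
theorem hinge_penalty_weakly_convex
    {E : Type*} [NormedAddCommGroup E] [InnerProductSpace ℝ E]
    (m : ℕ) (hm : 1 ≤ m) (F : E → ℝ) (h : Fin m → E → ℝ)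
    (ρ₀ ρ₁ β : ℝ) (hρ₀ : 0 ≤ ρ₀) (hρ₁ : 0 ≤ ρ₁) (hβ : 0 < β)
    (hF : ConvexOn ℝ Set.univ (fun x => F x + ρ₀ / 2 * ‖x‖ ^ 2))
    (hh : ∀ k, ConvexOn ℝ Set.univ (fun x => h k x + ρ₁ / 2 * ‖x‖ ^ 2)) :
    ConvexOn ℝ Set.univ
      (fun x => (F x + β / m * ∑ k, max (h k x) 0) + (ρ₀ + β * ρ₁) / 2 * ‖x‖ ^ 2) := by
  have hm0 : (m : ℝ) ≠ 0 := by positivity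
  have key : ConvexOn ℝ (Set.univ : Set E)
      (fun x => (F x + ρ₀ / 2 * ‖x‖ ^ 2) +
        ∑ k, (β / m) • max (h k x + ρ₁ / 2 * ‖x‖ ^ 2) (ρ₁ / 2 * ‖x‖ ^ 2)) := by
    apply hF.add
    have hterm : ∀ k : Fin m, ConvexOn ℝ (Set.univ : Set E)
        (fun x => (β / m) • max (h k x + ρ₁ / 2 * ‖x‖ ^ 2) (ρ₁ / 2 * ‖x‖ ^ 2)) := fun k =>
      ((hh k).sup (normsq_convex_scaled _ (by positivity))).smul (by positivity)
    have : ∀ s : Finset (Fin m), ConvexOn ℝ (Set.univ : Set E)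
        (fun x => ∑ k ∈ s, (β / m) • max (h k x + ρ₁ / 2 * ‖x‖ ^ 2) (ρ₁ / 2 * ‖x‖ ^ 2)) := by
      intro s
      induction s using Finset.induction with
      | empty => simpa using convexOn_const (0 : ℝ) convex_univ
      | insert _ _ hk ih =>
        simp only [Finset.sum_insert hk]
        exact (hterm _).add ih
    exact this Finset.univ
  have heq : (fun x => (F x + β / m * ∑ k, max (h k x) 0) + (ρ₀ + β * ρ₁) / 2 * ‖x‖ ^ 2)
      = (fun x => (F x + ρ₀ / 2 * ‖x‖ ^ 2) +
        ∑ k, (β / m) • max (h k x + ρ₁ / 2 * ‖x‖ ^ 2) (ρ₁ / 2 * ‖x‖ ^ 2)) := by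
    funext x
    have hmax : ∀ k : Fin m, max (h k x + ρ₁ / 2 * ‖x‖ ^ 2) (ρ₁ / 2 * ‖x‖ ^ 2)
        = max (h k x) 0 + ρ₁ / 2 * ‖x‖ ^ 2 := by
      intro k
      rw [← max_add_add_right]
      simp
    simp only [hmax, smul_eq_mul, mul_add, Finset.sum_add_distrib, Finset.mul_sum,
      Finset.sum_const, Finset.card_univ, Fintype.card_fin, nsmul_eq_mul]
    field_simp
    ring
  rw [heq]
  exact key
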